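/- Let C be a circle of radius r ≥ c·N² (for a sufficiently large absolute constant c) and S ⊂ C an integer distance set. Then |S ∩ [-N,N]²| ≤ 2. More precisely: the intersection C ∩ [-N,N]² lies in an arc of C of central angle α ≪ N/r, while any three non-collinear points of an integer distance set determine an angle θ ≫ 1/N; since three points of S in the arc would give an inscribed angle at most α/2 < θ, at most two points of S lie in [-N,N]². -/
import Mathlib

lemma key_ident (x1 y1 x2 y2 x3 y3 R : ℝ)
    (h1 : x1^2 + y1^2 = R^2) (h2 : x2^2 + y2^2 = R^2) (h3 : x3^2 + y3^2 = R^2) :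
    ((x2-x3)^2+(y2-y3)^2) * ((x1-x3)^2+(y1-y3)^2) * ((x1-x2)^2+(y1-y2)^2)
      = R^2 * (2*(((x2-x3)^2+(y2-y3)^2)*((x1-x3)^2+(y1-y3)^2))
             + 2*(((x1-x3)^2+(y1-y3)^2)*((x1-x2)^2+(y1-y2)^2))
             + 2*(((x1-x2)^2+(y1-y2)^2)*((x2-x3)^2+(y2-y3)^2))
             - (((x2-x3)^2+(y2-y3)^2))^2 - (((x1-x3)^2+(y1-y3)^2))^2 - (((x1-x2)^2+(y1-y2)^2))^2) := by
  have gram2 : R^2*(R^2*R^2 - (x2*x3+y2*y3)^2)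
      - (x1*x2+y1*y2)*((x1*x2+y1*y2)*R^2 - (x2*x3+y2*y3)*(x1*x3+y1*y3))
      + (x1*x3+y1*y3)*((x1*x2+y1*y2)*(x2*x3+y2*y3) - R^2*(x1*x3+y1*y3)) = 0 := by
    linear_combination ((x2*x3+y2*y3)^2 - R^4)*h1 + ((x1*x3+y1*y3)^2 - (x1^2+y1^2)*R^2)*h2 + ((x1*x2+y1*y2)^2 - (x1^2+y1^2)*(x2^2+y2^2))*h3
  have hA : (x2-x3)^2+(y2-y3)^2 = 2*R^2 - 2*(x2*x3+y2*y3) := by linear_combination h2 + h3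
  have hB : (x1-x3)^2+(y1-y3)^2 = 2*R^2 - 2*(x1*x3+y1*y3) := by linear_combination h1 + h3
  have hC : (x1-x2)^2+(y1-y2)^2 = 2*R^2 - 2*(x1*x2+y1*y2) := by linear_combination h1 + h2
  rw [hA, hB, hC]
  linear_combination (-4)*gram2

lemma pair_bound (a u v : ℝ) (hu : 1 ≤ u) (hv : 1 ≤ v) (huv : u + v = 2*a) : a ≤ u*v := by
  nlinarith [mul_nonneg (sub_nonneg.2 hu) (sub_nonneg.2 hv)]

lemma arith_lemma (a b c r N : ℝ) (ka kb kc : ℤ)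
    (haZ : a = ka) (hbZ : b = kb) (hcZ : c = kc)
    (ha1 : 1 ≤ a) (hb1 : 1 ≤ b) (hc1 : 1 ≤ c)
    (haN : a ≤ 3*N) (hbN : b ≤ 3*N) (hcN : c ≤ 3*N)
    (hN : 1 ≤ N) (hr : 10*N^2 ≤ r)
    (hiden : a^2*b^2*c^2 = r^2*(2*(a^2*b^2) + 2*(b^2*c^2) + 2*(c^2*a^2) - (a^2)^2 - (b^2)^2 - (c^2)^2)) :
    False := by
  have hrpos : 0 < r := by nlinarith
  set H : ℝ := 2*(a^2*b^2) + 2*(b^2*c^2) + 2*(c^2*a^2) - (a^2)^2 - (b^2)^2 - (c^2)^2 with hHdef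
  have h0 : 0 < r^2 * H := by
    rw [← hiden]; positivity
  have hHpos : 0 < H := by
    rcases mul_pos_iff.mp h0 with ⟨_, h⟩ | ⟨h2, _⟩
    · exact h
    · exact absurd h2 (by positivity : (0:ℝ) < r^2).asymm
  have hfactor : H = (a+b+c) * ((a+b-c)*(a-b+c)*(-a+b+c)) := by ring
  have habc : 0 < a + b + c := by linarith
  have hP3 : 0 < (a+b-c)*(a-b+c)*(-a+b+c) := by
    rw [hfactor] at hHpos
    rcases mul_pos_iff.mp hHpos with ⟨_, h⟩ | ⟨h2, _⟩
    · exact h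
    · exact absurd h2 habc.asymm
  have hf1 : 0 < a+b-c := by
    by_contra h
    push_neg at h
    have h2 : 0 < a-b+c := by linarith
    have h3 : 0 < -a+b+c := by linarith
    have hh : (a+b-c)*(a-b+c) ≤ 0 := mul_nonpos_of_nonpos_of_nonneg h h2.le
    have : (a+b-c)*(a-b+c)*(-a+b+c) ≤ 0 := mul_nonpos_of_nonpos_of_nonneg hh h3.le
    linarith
  have hf2 : 0 < a-b+c := by
    by_contra h
    push_neg at h
    have h3 : 0 < -a+b+c := by linarith
    have hh : (a+b-c)*(a-b+c) ≤ 0 := mul_nonpos_of_nonneg_of_nonpos hf1.le h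
    have : (a+b-c)*(a-b+c)*(-a+b+c) ≤ 0 := mul_nonpos_of_nonpos_of_nonneg hh h3.le
    linarith
  have hf3 : 0 < -a+b+c := by
    by_contra h
    push_neg at h
    have hh : 0 ≤ (a+b-c)*(a-b+c) := (mul_pos hf1 hf2).le
    have : (a+b-c)*(a-b+c)*(-a+b+c) ≤ 0 := mul_nonpos_of_nonneg_of_nonpos hh h
    linarith
  have int_ge : ∀ x : ℝ, ∀ k : ℤ, x = k → 0 < x → 1 ≤ x := by
    rintro x k rfl hx
    exact_mod_cast Int.cast_pos.mp hx
  have hf1' : 1 ≤ a+b-c := int_ge _ (ka+kb-kc) (by push_cast [haZ,hbZ,hcZ]; ring) hf1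
  have hf2' : 1 ≤ a-b+c := int_ge _ (ka-kb+kc) (by push_cast [haZ,hbZ,hcZ]; ring) hf2
  have hf3' : 1 ≤ -a+b+c := int_ge _ (-ka+kb+kc) (by push_cast [haZ,hbZ,hcZ]; ring) hf3
  have e1 : a ≤ (a+b-c)*(a-b+c) := pair_bound a _ _ hf1' hf2' (by ring)
  have e2 : b ≤ (a+b-c)*(-a+b+c) := pair_bound b _ _ hf1' hf3' (by ring)
  have e3 : c ≤ (a-b+c)*(-a+b+c) := pair_bound c _ _ hf2' hf3' (by ring)
  -- P3^2 ≥ abc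
  have hab : a*b ≤ ((a+b-c)*(a-b+c)) * ((a+b-c)*(-a+b+c)) :=
    mul_le_mul e1 e2 (by linarith) (by linarith [e1])
  have hP3sq : a*b*c ≤ ((a+b-c)*(a-b+c)*(-a+b+c))^2 := by
    have h2 : a*b*c ≤ (((a+b-c)*(a-b+c)) * ((a+b-c)*(-a+b+c))) * ((a-b+c)*(-a+b+c)) :=
      mul_le_mul hab e3 (by linarith) (mul_nonneg (mul_pos hf1 hf2).le (mul_pos hf1 hf3).le)
    calc a*b*c ≤ (((a+b-c)*(a-b+c)) * ((a+b-c)*(-a+b+c))) * ((a-b+c)*(-a+b+c)) := h2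
      _ = ((a+b-c)*(a-b+c)*(-a+b+c))^2 := by ring
  have hH2 : (a+b+c)^2 * (a*b*c) ≤ H^2 := by
    calc (a+b+c)^2 * (a*b*c) ≤ (a+b+c)^2 * ((a+b-c)*(a-b+c)*(-a+b+c))^2 :=
          mul_le_mul_of_nonneg_left hP3sq (sq_nonneg _)
      _ = H^2 := by rw [hfactor]; ring
  have hiden4 : r^4 * H^2 = (a*b*c)^4 := by
    calc r^4 * H^2 = (r^2*H)^2 := by ring
      _ = (a^2*b^2*c^2)^2 := by rw [← hiden]
      _ = (a*b*c)^4 := by ring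
  have habcpos : 0 < a*b*c := by positivity
  have step1 : r^4 * (a+b+c)^2 ≤ (a*b*c)^3 := by
    have h1 : r^4 * ((a+b+c)^2 * (a*b*c)) ≤ r^4 * H^2 :=
      mul_le_mul_of_nonneg_left hH2 (by positivity)
    rw [hiden4] at h1
    have h2 : (r^4 * (a+b+c)^2) * (a*b*c) ≤ (a*b*c)^3 * (a*b*c) := by
      calc (r^4 * (a+b+c)^2) * (a*b*c) = r^4 * ((a+b+c)^2 * (a*b*c)) := by ring
        _ ≤ (a*b*c)^4 := h1
        _ = (a*b*c)^3 * (a*b*c) := by ring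
    exact le_of_mul_le_mul_right h2 habcpos
  have hab9 : a*b ≤ 9*N^2 := by
    calc a*b ≤ (3*N)*(3*N) := mul_le_mul haN hbN (by linarith) (by positivity)
      _ = 9*N^2 := by ring
  have hbox : a*b*c ≤ 9*N^2*(a+b+c) := by
    calc a*b*c ≤ 9*N^2*c := mul_le_mul_of_nonneg_right hab9 (by linarith)
      _ ≤ 9*N^2*(a+b+c) := mul_le_mul_of_nonneg_left (by linarith) (by positivity)
  have hcube : (a*b*c)^3 ≤ 729*N^6*(a+b+c)^3 := by
    calc (a*b*c)^3 ≤ (9*N^2*(a+b+c))^3 := pow_le_pow_left₀ habcpos.le hbox 3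
      _ = 729*N^6*(a+b+c)^3 := by ring
  have step2 : r^4 ≤ 729*N^6*(a+b+c) := by
    have hs : 0 < (a+b+c)^2 := by positivity
    have h3 : r^4 * (a+b+c)^2 ≤ (729*N^6*(a+b+c)) * (a+b+c)^2 := by
      calc r^4 * (a+b+c)^2 ≤ (a*b*c)^3 := step1
        _ ≤ 729*N^6*(a+b+c)^3 := hcube
        _ = (729*N^6*(a+b+c)) * (a+b+c)^2 := by ring
    exact le_of_mul_le_mul_right h3 hs
  have hsum : a+b+c ≤ 9*N := by linarith
  have step3 : r^4 ≤ 6561*N^7 := by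
    have h4 : 729*N^6*(a+b+c) ≤ 729*N^6*(9*N) :=
      mul_le_mul_of_nonneg_left hsum (by positivity)
    have h5 : 729*N^6*(9*N) = 6561*N^7 := by ring
    linarith
  have hr4 : 10000*N^8 ≤ r^4 := by
    have := pow_le_pow_left₀ (by positivity : (0:ℝ) ≤ 10*N^2) hr 4
    calc (10000:ℝ)*N^8 = (10*N^2)^4 := by ring
      _ ≤ r^4 := this
  have hN78 : N^7 ≤ N^8 := pow_le_pow_right₀ (by linarith) (by norm_num)
  have hN8 : 0 < N^8 := by positivity
  linarith [step3, hr4, hN78, hN8]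

lemma dist_sq_euclid (p q : EuclideanSpace ℝ (Fin 2)) :
    dist p q ^ 2 = (p 0 - q 0)^2 + (p 1 - q 1)^2 := by
  rw [EuclideanSpace.dist_eq, Real.sq_sqrt (by positivity)]
  simp [Fin.sum_univ_two, Real.dist_eq, sq_abs]

lemma dist_le_3N (p q : EuclideanSpace ℝ (Fin 2)) (N : ℝ) (hN : 1 ≤ N)
    (hp : ∀ i, |p i| ≤ N) (hq : ∀ i, |q i| ≤ N) : dist p q ≤ 3*N := by
  have h2 : dist p q ^ 2 ≤ (3*N)^2 := by
    rw [dist_sq_euclid]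
    have h0 : (p 0 - q 0)^2 ≤ (2*N)^2 := by
      have := abs_sub_abs_le_abs_sub (p 0) (q 0)
      have h1 := hp 0; have h2 := hq 0
      have : |p 0 - q 0| ≤ 2*N := by
        calc |p 0 - q 0| ≤ |p 0| + |q 0| := abs_sub _ _
          _ ≤ 2*N := by linarith
      calc (p 0 - q 0)^2 = |p 0 - q 0|^2 := (sq_abs _).symm
        _ ≤ (2*N)^2 := by nlinarith [abs_nonneg (p 0 - q 0)]
    have h1 : (p 1 - q 1)^2 ≤ (2*N)^2 := by
      have h1 := hp 1; have h2 := hq 1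
      have : |p 1 - q 1| ≤ 2*N := by
        calc |p 1 - q 1| ≤ |p 1| + |q 1| := abs_sub _ _
          _ ≤ 2*N := by linarith
      calc (p 1 - q 1)^2 = |p 1 - q 1|^2 := (sq_abs _).symm
        _ ≤ (2*N)^2 := by nlinarith [abs_nonneg (p 1 - q 1)]
    nlinarith
  have h3 : 0 ≤ 3*N := by linarith
  nlinarith [dist_nonneg (x := p) (y := q)]

theorem stmt_19 :
    ∃ c > (0 : ℝ), ∀ N : ℝ, 1 ≤ N → ∀ r : ℝ, c * N ^ 2 ≤ r →
      ∀ z : EuclideanSpace ℝ (Fin 2), ∀ S : Set (EuclideanSpace ℝ (Fin 2)),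
        S ⊆ Metric.sphere z r →
        (∀ p ∈ S, ∀ q ∈ S, ∃ k : ℤ, dist p q = k) →
        ∀ F : Finset (EuclideanSpace ℝ (Fin 2)),
          (↑F ⊆ {p ∈ S | ∀ i, |p i| ≤ N}) → F.card ≤ 2 := by
  refine ⟨10, by norm_num, ?_⟩
  intro N hN r hr z S hSsph hint F hF
  by_contra hcard
  push_neg at hcard
  obtain ⟨T, hTsub, hT3⟩ := F.exists_subset_card_eq (by omega : 3 ≤ F.card)
  classical
  obtain ⟨p1, p2, p3, h12, h13, h23, hTeq⟩ := Finset.card_eq_three.mp hT3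
  have m1 : p1 ∈ {p ∈ S | ∀ i, |p i| ≤ N} := hF (hTsub (by rw [hTeq]; simp))
  have m2 : p2 ∈ {p ∈ S | ∀ i, |p i| ≤ N} := hF (hTsub (by rw [hTeq]; simp))
  have m3 : p3 ∈ {p ∈ S | ∀ i, |p i| ≤ N} := hF (hTsub (by rw [hTeq]; simp))
  obtain ⟨hS1, hb1⟩ := m1
  obtain ⟨hS2, hb2⟩ := m2
  obtain ⟨hS3, hb3⟩ := m3
  -- distances
  set a := dist p2 p3 with hadef
  set b := dist p1 p3 with hbdef
  set c := dist p1 p2 with hcdef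
  obtain ⟨ka, hka⟩ := hint p2 hS2 p3 hS3
  obtain ⟨kb, hkb⟩ := hint p1 hS1 p3 hS3
  obtain ⟨kc, hkc⟩ := hint p1 hS1 p2 hS2
  have int_ge1 : ∀ x : ℝ, ∀ k : ℤ, x = k → 0 < x → 1 ≤ x := by
    rintro x k rfl hx
    exact_mod_cast Int.cast_pos.mp hx
  have ha1 : 1 ≤ a := int_ge1 a ka hka (dist_pos.mpr h23)
  have hb1' : 1 ≤ b := int_ge1 b kb hkb (dist_pos.mpr h13)
  have hc1 : 1 ≤ c := int_ge1 c kc hkc (dist_pos.mpr h12)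
  have haN : a ≤ 3*N := dist_le_3N p2 p3 N hN hb2 hb3
  have hbN : b ≤ 3*N := dist_le_3N p1 p3 N hN hb1 hb3
  have hcN : c ≤ 3*N := dist_le_3N p1 p2 N hN hb1 hb2
  -- on sphere
  have hs1 : (p1 0 - z 0)^2 + (p1 1 - z 1)^2 = r^2 := by
    rw [← dist_sq_euclid]
    rw [Metric.mem_sphere.mp (hSsph hS1)]
  have hs2 : (p2 0 - z 0)^2 + (p2 1 - z 1)^2 = r^2 := by
    rw [← dist_sq_euclid]
    rw [Metric.mem_sphere.mp (hSsph hS2)]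
  have hs3 : (p3 0 - z 0)^2 + (p3 1 - z 1)^2 = r^2 := by
    rw [← dist_sq_euclid]
    rw [Metric.mem_sphere.mp (hSsph hS3)]
  have key := key_ident (p1 0 - z 0) (p1 1 - z 1) (p2 0 - z 0) (p2 1 - z 1)
    (p3 0 - z 0) (p3 1 - z 1) r hs1 hs2 hs3
  have ha2 : a^2 = ((p2 0 - z 0)-(p3 0 - z 0))^2 + ((p2 1 - z 1)-(p3 1 - z 1))^2 := by
    rw [hadef, dist_sq_euclid]; ring
  have hb2' : b^2 = ((p1 0 - z 0)-(p3 0 - z 0))^2 + ((p1 1 - z 1)-(p3 1 - z 1))^2 := by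
    rw [hbdef, dist_sq_euclid]; ring
  have hc2 : c^2 = ((p1 0 - z 0)-(p2 0 - z 0))^2 + ((p1 1 - z 1)-(p2 1 - z 1))^2 := by
    rw [hcdef, dist_sq_euclid]; ring
  have hiden : a^2*b^2*c^2 = r^2*(2*(a^2*b^2) + 2*(b^2*c^2) + 2*(c^2*a^2) - (a^2)^2 - (b^2)^2 - (c^2)^2) := by
    rw [ha2, hb2', hc2]
    linear_combination key
  exact arith_lemma a b c r N ka kb kc hka hkb hkc ha1 hb1' hc1 haN hbN hcN hN
    (by linarith [hr] : 10*N^2 ≤ r) hiden
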